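/- Let E be a real inner product space, λ ∈ ℝ, and f : E → ℝ a λ-concave continuously differentiable function. Let α : [0, ∞) → E be an f-gradient curve. Then for all t ≥ 0, f(α(t)) − f(α(0)) ≤ ‖∇f(α(0))‖²·( θ_λ(t) + (λ/2)·θ_λ(t)² ), where θ_λ(t) = t if λ = 0 and θ_λ(t) = (e^{λt} − 1)/λ if λ ≠ 0. -/

import Mathlib

open scoped RealInnerProductSpace
open Set

lemma grad_mono_aux {E : Type*} [NormedAddCommGroup E] [InnerProductSpace ℝ E]
    (lam : ℝ) (f : E → ℝ) (g : E → E)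
    (hconc : ConcaveOn ℝ Set.univ (fun x => f x - lam / 2 * ‖x‖ ^ 2))
    (hg : ∀ x, HasFDerivAt f (innerSL ℝ (g x)) x) :
    ∀ x y : E, ⟪g x - g y, x - y⟫ ≤ lam * ‖x - y‖ ^ 2 := by
  set G : E → E := fun z => g z - lam • z with hG
  have hGd : ∀ z : E, HasFDerivAt (fun x => f x - lam / 2 * ‖x‖ ^ 2) (innerSL ℝ (G z)) z := by
    intro z
    have h1 : HasFDerivAt (fun x : E => ‖x‖ ^ 2) (2 • (innerSL ℝ z)) z :=
      (hasFDerivAt_id z).norm_sq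
    have h2 := (hg z).sub (h1.const_mul (lam / 2))
    refine h2.congr_fderiv ?_
    ext u
    simp [G, inner_sub_left, real_inner_smul_left]
    ring
  have key : ∀ x y : E, ⟪G x - G y, x - y⟫ ≤ 0 := by
    intro x y
    set c : ℝ → E := fun t => y + t • (x - y) with hc
    have hcd : ∀ t : ℝ, HasDerivAt c (x - y) t := by
      intro t
      simpa [c] using ((hasDerivAt_id t).smul_const (x - y)).const_add y
    have hφd : ∀ t : ℝ, HasDerivAt (fun t => f (c t) - lam / 2 * ‖c t‖ ^ 2)
        (⟪G (c t), x - y⟫) t := by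
      intro t
      simpa [Function.comp_def] using (hGd (c t)).comp_hasDerivAt t (hcd t)
    have hφc : ConcaveOn ℝ Set.univ (fun t => f (c t) - lam / 2 * ‖c t‖ ^ 2) := by
      have h := hconc.comp_affineMap (AffineMap.lineMap y x : ℝ →ᵃ[ℝ] E)
      have he : ∀ t : ℝ, (AffineMap.lineMap y x : ℝ →ᵃ[ℝ] E) t = c t := by
        intro t
        simp [AffineMap.lineMap_apply, c, add_comm]
      have : ((fun x => f x - lam / 2 * ‖x‖ ^ 2) ∘ (AffineMap.lineMap y x : ℝ →ᵃ[ℝ] E))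
          = fun t => f (c t) - lam / 2 * ‖c t‖ ^ 2 := by
        funext t; simp [Function.comp, he t]
      rw [← this]
      simpa using h
    have hA := hφc.antitoneOn_deriv (fun t _ => (hφd t).differentiableAt)
    have h01 := hA (mem_univ (0:ℝ)) (mem_univ (1:ℝ)) zero_le_one
    rw [(hφd 0).deriv, (hφd 1).deriv] at h01
    have hc0 : c 0 = y := by simp [c]
    have hc1 : c 1 = x := by simp [c]
    rw [hc0, hc1] at h01
    have := sub_nonpos.mpr h01
    rwa [← inner_sub_left] at this
  intro x y
  have h := key x y
  have hd : G x - G y = (g x - g y) - lam • (x - y) := by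
    simp only [G, smul_sub]
    abel
  rw [hd, inner_sub_left, real_inner_smul_left, real_inner_self_eq_norm_sq] at h
  linarith
open Set Filter Topology

lemma grad_norm_bound_aux {E : Type*} [NormedAddCommGroup E] [InnerProductSpace ℝ E]
    (lam : ℝ) (g : E → E)
    (hmono : ∀ x y : E, ⟪g x - g y, x - y⟫ ≤ lam * ‖x - y‖ ^ 2)
    (α : ℝ → E)
    (hα : ∀ t ∈ Set.Ici (0 : ℝ), HasDerivWithinAt α (g (α t)) (Set.Ici 0) t) :
    ∀ t ≥ (0 : ℝ), ‖g (α t)‖ ≤ Real.exp (lam * t) * ‖g (α 0)‖ := by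
  intro t ht
  -- Step 1: discrete Gronwall bound for time shifts
  have main : ∀ ε > (0:ℝ), ‖α (t + ε) - α t‖ ≤ Real.exp (lam * t) * ‖α ε - α 0‖ := by
    intro ε hε
    set v : ℝ → E := fun s => α (s + ε) - α s with hv
    have hvd : ∀ s ∈ Ici (0:ℝ), HasDerivWithinAt v (g (α (s + ε)) - g (α s)) (Ici 0) s := by
      intro s hs
      have hshift : HasDerivWithinAt (fun s : ℝ => α (s + ε)) (g (α (s + ε))) (Ici 0) s := by
        have h1 : HasDerivWithinAt (fun s : ℝ => s + ε) 1 (Ici 0) s :=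
          ((hasDerivAt_id s).add_const ε).hasDerivWithinAt
        have h2 := hα (s + ε) (by simp only [mem_Ici] at hs ⊢; linarith)
        have := HasDerivWithinAt.scomp s h2 h1
          (fun r hr => by simp only [mem_Ici] at hr ⊢; linarith)
        simpa [Function.comp_def] using this
      exact hshift.sub (hα s hs)
    set u : ℝ → ℝ := fun s => Real.exp (-(2 * lam) * s) * ‖v s‖ ^ 2 with hu
    have hud : ∀ s ∈ Ici (0:ℝ), HasDerivWithinAt u
        (-(2 * lam) * Real.exp (-(2 * lam) * s) * ‖v s‖ ^ 2
          + Real.exp (-(2 * lam) * s) * (2 * ⟪v s, g (α (s + ε)) - g (α s)⟫)) (Ici 0) s := by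
      intro s hs
      have he : HasDerivAt (fun s : ℝ => Real.exp (-(2 * lam) * s))
          (Real.exp (-(2 * lam) * s) * -(2 * lam)) s :=
        by simpa using ((hasDerivAt_id s).const_mul (-(2 * lam))).exp
      have hw : HasDerivWithinAt (fun s => ‖v s‖ ^ 2)
          (2 * ⟪v s, g (α (s + ε)) - g (α s)⟫) (Ici 0) s := (hvd s hs).norm_sq
      have := (he.hasDerivWithinAt).mul hw
      refine this.congr_deriv ?_
      ring
    have hanti : AntitoneOn u (Ici 0) := by
      apply antitoneOn_of_hasDerivWithinAt_nonpos (convex_Ici 0)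
        (f' := fun s => -(2 * lam) * Real.exp (-(2 * lam) * s) * ‖v s‖ ^ 2
          + Real.exp (-(2 * lam) * s) * (2 * ⟪v s, g (α (s + ε)) - g (α s)⟫))
        (fun s hs => (hud s hs).continuousWithinAt)
      · intro s hs
        rw [interior_Ici] at hs ⊢
        exact (hud s (mem_Ici.mpr (le_of_lt (mem_Ioi.mp hs)))).mono Ioi_subset_Ici_self
      · intro s hs
        rw [interior_Ici] at hs
        have hb : ⟪v s, g (α (s + ε)) - g (α s)⟫ ≤ lam * ‖v s‖ ^ 2 := by
          have := hmono (α (s + ε)) (α s)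
          rwa [real_inner_comm]
        have hexp : (0:ℝ) < Real.exp (-(2 * lam) * s) := Real.exp_pos _
        nlinarith [hexp, hb]
    have h2 := hanti (self_mem_Ici) (mem_Ici.mpr ht) ht
    simp only [u, v, mul_zero, Real.exp_zero, one_mul, zero_add] at h2
    -- h2 : exp(-(2lam)t) * ‖α (t+ε) - α t‖^2 ≤ ‖α ε - α 0‖^2
    have hsq : ‖α (t + ε) - α t‖ ^ 2 ≤ (Real.exp (lam * t) * ‖α ε - α 0‖) ^ 2 := by
      have he2 : Real.exp (-(2 * lam) * t) = (Real.exp (lam * t))⁻¹ ^ 2 := by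
        rw [← Real.exp_neg, ← Real.exp_nat_mul]
        ring_nf
      rw [he2] at h2
      have hp : (0:ℝ) < Real.exp (lam * t) := Real.exp_pos _
      calc ‖α (t + ε) - α t‖ ^ 2
          = (Real.exp (lam * t)) ^ 2 * ((Real.exp (lam * t))⁻¹ ^ 2 * ‖α (t + ε) - α t‖ ^ 2) := by
            field_simp
        _ ≤ (Real.exp (lam * t)) ^ 2 * ‖α ε - α 0‖ ^ 2 := by
            apply mul_le_mul_of_nonneg_left h2 (by positivity)
        _ = (Real.exp (lam * t) * ‖α ε - α 0‖) ^ 2 := by ring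
    have h0 : (0:ℝ) ≤ Real.exp (lam * t) * ‖α ε - α 0‖ := by positivity
    exact (pow_le_pow_iff_left₀ (norm_nonneg _) h0 two_ne_zero).mp hsq
  -- Step 2: take limits ε → 0⁺
  have slope_lim : ∀ s ≥ (0:ℝ), Tendsto (fun ε : ℝ => ‖α (s + ε) - α s‖ / ε) (𝓝[>] 0)
      (𝓝 ‖g (α s)‖) := by
    intro s hs
    have hmap : Tendsto (fun ε : ℝ => s + ε) (𝓝[>] (0:ℝ)) (𝓝[Ici 0 \ {s}] s) := by
      apply tendsto_nhdsWithin_of_tendsto_nhds_of_eventually_within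
      · have h1 : Tendsto (fun ε : ℝ => s + ε) (𝓝 (0:ℝ)) (𝓝 s) := by
          simpa [Pi.add_def] using (continuous_const.add continuous_id).tendsto (0:ℝ)
        exact h1.mono_left nhdsWithin_le_nhds
      · filter_upwards [self_mem_nhdsWithin] with ε hε
        have hε' : (0:ℝ) < ε := hε
        refine ⟨by simp only [mem_Ici]; linarith, by simp only [mem_singleton_iff]; intro h; linarith⟩
    have hs1 := (hasDerivWithinAt_iff_tendsto_slope.mp (hα s hs)).comp hmap
    have hs2 := (continuous_norm.tendsto (g (α s))).comp hs1
    apply hs2.congr'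
    filter_upwards [self_mem_nhdsWithin] with ε hε
    have hε' : (0:ℝ) < ε := hε
    simp only [Function.comp_apply, slope, vsub_eq_sub]
    rw [norm_smul, add_sub_cancel_left, norm_inv, Real.norm_eq_abs, abs_of_pos hε',
      div_eq_inv_mul]
  have hL1 := slope_lim t ht
  have hL2 : Tendsto (fun ε : ℝ => Real.exp (lam * t) * (‖α (0 + ε) - α 0‖ / ε)) (𝓝[>] (0:ℝ))
      (𝓝 (Real.exp (lam * t) * ‖g (α 0)‖)) := (slope_lim 0 le_rfl).const_mul _
  refine le_of_tendsto_of_tendsto hL1 hL2 ?_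
  filter_upwards [self_mem_nhdsWithin] with ε hε
  have hε' : (0:ℝ) < ε := hε
  have hm := main ε hε'
  rw [zero_add, ← mul_div_assoc]
  gcongr

/-- The function `θ_λ` of Lemma 2.4. -/
noncomputable def thetaLam (lam t : ℝ) : ℝ :=
  if lam = 0 then t else (Real.exp (lam * t) - 1) / lam

lemma thetaLam_zero (lam : ℝ) : thetaLam lam 0 = 0 := by
  unfold thetaLam; split <;> simp

lemma hasDerivAt_thetaLam (lam t : ℝ) : HasDerivAt (thetaLam lam ·) (Real.exp (lam * t)) t := by
  unfold thetaLam
  by_cases h : lam = 0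
  · simp only [if_pos h, h, zero_mul, Real.exp_zero]
    exact hasDerivAt_id t
  · simp only [if_neg h]
    have h1 := ((((hasDerivAt_id t).const_mul lam).exp).sub_const 1).div_const lam
    refine h1.congr_deriv ?_
    field_simp
    rfl

lemma one_add_lam_thetaLam (lam t : ℝ) : 1 + lam * thetaLam lam t = Real.exp (lam * t) := by
  unfold thetaLam
  split
  · next h => simp [h]
  · next h => field_simp; ring

/-- Growth estimate of a λ-concave function along its gradient curve
(linear model of the key inequality in the proof of Lemma 2.4). -/
theorem gradient_curve_value_growth_est
    {E : Type*} [NormedAddCommGroup E] [InnerProductSpace ℝ E]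
    (lam : ℝ) (f : E → ℝ) (g : E → E)
    (hconc : ConcaveOn ℝ Set.univ (fun x => f x - lam / 2 * ‖x‖ ^ 2))
    (hg : ∀ x, HasFDerivAt f (innerSL ℝ (g x)) x) (hgc : Continuous g)
    (α : ℝ → E)
    (hα : ∀ t ∈ Set.Ici (0 : ℝ), HasDerivWithinAt α (g (α t)) (Set.Ici 0) t) :
    ∀ t ≥ (0 : ℝ),
      f (α t) - f (α 0) ≤ ‖g (α 0)‖ ^ 2 * (thetaLam lam t + lam / 2 * (thetaLam lam t) ^ 2) := by
  have hmono := grad_mono_aux lam f g hconc hg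
  have hgb := grad_norm_bound_aux lam g hmono α hα
  intro t ht
  set C := ‖g (α 0)‖ ^ 2 with hC
  set H : ℝ → ℝ := fun s => f (α s) - C * (thetaLam lam s + lam / 2 * (thetaLam lam s) ^ 2)
    with hH
  have hHd : ∀ s ∈ Ici (0:ℝ), HasDerivWithinAt H
      (‖g (α s)‖ ^ 2 - C * (Real.exp (lam * s) * Real.exp (lam * s))) (Ici 0) s := by
    intro s hs
    have hF : HasDerivWithinAt (fun s => f (α s)) (‖g (α s)‖ ^ 2) (Ici 0) s := by
      have h1 := (hg (α s)).comp_hasDerivWithinAt s (hα s hs)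
      simpa [Function.comp_def, real_inner_self_eq_norm_sq] using h1
    have hθ := hasDerivAt_thetaLam lam s
    have hGd : HasDerivAt (fun s => C * (thetaLam lam s + lam / 2 * (thetaLam lam s) ^ 2))
        (C * (Real.exp (lam * s) * Real.exp (lam * s))) s := by
      have h1 := (hθ.add ((hθ.pow 2).const_mul (lam / 2))).const_mul C
      refine h1.congr_deriv ?_
      have h2 := one_add_lam_thetaLam lam s
      rw [← h2]
      push_cast
      ring
    exact hF.sub hGd.hasDerivWithinAt
  have hanti : AntitoneOn H (Ici 0) := by
    apply antitoneOn_of_hasDerivWithinAt_nonpos (convex_Ici 0)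
      (f' := fun s => ‖g (α s)‖ ^ 2 - C * (Real.exp (lam * s) * Real.exp (lam * s)))
      (fun s hs => (hHd s hs).continuousWithinAt)
    · intro s hs
      rw [interior_Ici] at hs ⊢
      exact (hHd s (mem_Ici.mpr (mem_Ioi.mp hs).le)).mono Ioi_subset_Ici_self
    · intro s hs
      rw [interior_Ici] at hs
      have hb := hgb s hs.le
      have h2 : ‖g (α s)‖ ^ 2 ≤ (Real.exp (lam * s) * ‖g (α 0)‖) ^ 2 :=
        pow_le_pow_left₀ (norm_nonneg _) hb 2
      have h3 : (Real.exp (lam * s) * ‖g (α 0)‖) ^ 2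
          = C * (Real.exp (lam * s) * Real.exp (lam * s)) := by rw [hC]; ring
      linarith
  have hfin := hanti self_mem_Ici (mem_Ici.mpr ht) ht
  have hH0 : H 0 = f (α 0) := by simp [hH, thetaLam_zero]
  rw [hH0] at hfin
  simp only [hH] at hfin
  linarith
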